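/- Let 𝒳 be a nonempty closed convex subset of a real Hilbert space, let g_1, …, g_T : 𝒳 → ℝ be convex and L_g-Lipschitz continuous, let R : 𝒳 → ℝ be α-strongly convex (α > 0) with |R(x) − R(x̃)| ≤ D for all x, x̃ ∈ 𝒳, and let η > 0. Suppose for each t ∈ {1, …, T} the point x_t ∈ 𝒳 minimizes x ↦ Σ_{s=1}^{t-1} g_s(x) + R(x)/η over 𝒳 (with such minimizers existing, including x_{T+1}). Then: (i) ‖x_{t+1} − x_t‖ ≤ η L_g / α for all t ∈ {1, …, T}; and (ii) Σ_{t=1}^{T} g_t(x_t) − inf_{x ∈ 𝒳} Σ_{t=1}^{T} g_t(x) ≤ D/η + η T L_g² / α. -/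

import Mathlib

open Finset

/-- Sum of convex functions over `Icc 1 n` is convex. -/
lemma ftrl_sum_convex {E : Type*} [NormedAddCommGroup E] [NormedSpace ℝ E]
    {X : Set E} (hX : Convex ℝ X) {g : ℕ → E → ℝ} {T : ℕ}
    (hconv : ∀ t, 1 ≤ t → t ≤ T → ConvexOn ℝ X (g t)) :
    ∀ n, n ≤ T → ConvexOn ℝ X (fun y => ∑ s ∈ Icc 1 n, g s y) := by
  intro n
  induction n with
  | zero => intro _; simpa using convexOn_const (0 : ℝ) hX
  | succ k ih =>
    intro hk
    have h1 : (fun y => ∑ s ∈ Icc 1 (k+1), g s y)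
        = fun y => (∑ s ∈ Icc 1 k, g s y) + g (k+1) y := by
      funext y
      exact Finset.sum_Icc_succ_top (by omega) _
    rw [h1]
    exact (ih (by omega)).add (hconv (k+1) (by omega) hk)

/-- Convex plus strongly convex is strongly convex. -/
lemma ftrl_convex_add_strong {E : Type*} [NormedAddCommGroup E] [NormedSpace ℝ E]
    {X : Set E} {m : ℝ} {f h : E → ℝ} (hf : ConvexOn ℝ X f) (hh : StrongConvexOn X m h) :
    StrongConvexOn X m (fun y => f y + h y) := by
  refine ⟨hf.1, fun p hp q hq a b ha hb hab => ?_⟩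
  have h1 := hf.2 hp hq ha hb hab
  have h2 := hh.2 hp hq ha hb hab
  simp only [smul_eq_mul] at h1 h2 ⊢
  linarith

/-- Dividing a strongly convex function by `η > 0` scales the modulus. -/
lemma ftrl_div_strong {E : Type*} [NormedAddCommGroup E] [NormedSpace ℝ E]
    {X : Set E} {m η : ℝ} {f : E → ℝ} (hf : StrongConvexOn X m f) (hη : 0 < η) :
    StrongConvexOn X (m / η) (fun y => f y / η) := by
  refine ⟨hf.1, fun p hp q hq a b ha hb hab => ?_⟩
  have h := hf.2 hp hq ha hb hab
  simp only [smul_eq_mul] at h ⊢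
  calc f (a • p + b • q) / η
      ≤ (a * f p + b * f q - a * b * (m / 2 * ‖p - q‖ ^ 2)) / η :=
        (div_le_div_iff_of_pos_right hη).mpr h
    _ = a * (f p / η) + b * (f q / η) - a * b * (m / η / 2 * ‖p - q‖ ^ 2) := by ring

/-- Quadratic growth at a minimizer of a strongly convex function. -/
lemma ftrl_strong_min {E : Type*} [NormedAddCommGroup E] [NormedSpace ℝ E]
    {X : Set E} {m : ℝ} {f : E → ℝ} (hf : StrongConvexOn X m f)
    {z : E} (hz : z ∈ X) (hmin : ∀ y ∈ X, f z ≤ f y) :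
    ∀ y ∈ X, f z + m / 2 * ‖y - z‖ ^ 2 ≤ f y := by
  intro y hy
  have hyz : 0 ≤ f y - f z := by linarith [hmin y hy]
  have key : ∀ lam : ℝ, 0 < lam → lam ≤ 1 →
      (1 - lam) * (m / 2 * ‖y - z‖ ^ 2) ≤ f y - f z := by
    intro lam h0 h1
    have hb0 : (0:ℝ) ≤ 1 - lam := by linarith
    have hcomb := hf.2 hy hz h0.le hb0 (by ring)
    have hmem : lam • y + (1 - lam) • z ∈ X := hf.1 hy hz h0.le hb0 (by ring)
    have hm := hmin _ hmem
    simp only [smul_eq_mul] at hcomb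
    have h2 : lam * ((1 - lam) * (m / 2 * ‖y - z‖ ^ 2)) ≤ lam * (f y - f z) := by
      nlinarith [hcomb, hm]
    exact le_of_mul_le_mul_left h2 h0
  set c : ℝ := m / 2 * ‖y - z‖ ^ 2 with hc
  have hcle : c ≤ f y - f z := by
    rcases le_or_gt c 0 with hc0 | hc0
    · linarith
    · refine le_of_forall_pos_le_add ?_
      intro ε hε
      set lam : ℝ := min 1 (ε / c) with hlam
      have hl0 : 0 < lam := lt_min one_pos (div_pos hε hc0)
      have hl1 : lam ≤ 1 := min_le_left _ _
      have hk := key lam hl0 hl1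
      have hlc : lam * c ≤ ε := by
        have h1 : lam * c ≤ (ε / c) * c :=
          mul_le_mul_of_nonneg_right (min_le_right _ _) hc0.le
        have h2 : (ε / c) * c = ε := div_mul_cancel₀ _ hc0.ne'
        linarith
      nlinarith [hk, hlc]
  linarith

theorem stmt_4
    {E : Type*} [NormedAddCommGroup E] [InnerProductSpace ℝ E] [CompleteSpace E]
    (X : Set E) (hXne : X.Nonempty) (hXclosed : IsClosed X) (hXconvex : Convex ℝ X)
    (T : ℕ) (g : ℕ → E → ℝ) (Lg : ℝ) (hLg : 0 ≤ Lg)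
    (hconv : ∀ t, 1 ≤ t → t ≤ T → ConvexOn ℝ X (g t))
    (hlip : ∀ t, 1 ≤ t → t ≤ T → ∀ a ∈ X, ∀ b ∈ X, |g t a - g t b| ≤ Lg * ‖a - b‖)
    (R : E → ℝ) (α : ℝ) (hα : 0 < α) (hR : StrongConvexOn X α R)
    (D : ℝ) (hD : ∀ a ∈ X, ∀ b ∈ X, |R a - R b| ≤ D)
    (η : ℝ) (hη : 0 < η)
    (x : ℕ → E)
    (hx : ∀ t, 1 ≤ t → t ≤ T + 1 → x t ∈ X ∧
      ∀ y ∈ X, (∑ s ∈ Finset.Icc 1 (t - 1), g s (x t)) + R (x t) / η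
        ≤ (∑ s ∈ Finset.Icc 1 (t - 1), g s y) + R y / η) :
    (∀ t, 1 ≤ t → t ≤ T → ‖x (t + 1) - x t‖ ≤ η * Lg / α) ∧
    (∀ y ∈ X, (∑ t ∈ Finset.Icc 1 T, g t (x t)) - (∑ t ∈ Finset.Icc 1 T, g t y)
      ≤ D / η + η * T * Lg ^ 2 / α) := by
  have hmem : ∀ t, 1 ≤ t → t ≤ T + 1 → x t ∈ X := fun t h1 h2 => (hx t h1 h2).1
  set F : ℕ → E → ℝ := fun n y => (∑ s ∈ Finset.Icc 1 n, g s y) + R y / η with hF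
  have hFstrong : ∀ n, n ≤ T → StrongConvexOn X (α / η) (F n) := fun n hn =>
    ftrl_convex_add_strong (ftrl_sum_convex hXconvex hconv n hn) (ftrl_div_strong hR hη)
  have hquad : ∀ t, 1 ≤ t → t ≤ T + 1 → ∀ y ∈ X,
      F (t - 1) (x t) + (α / η) / 2 * ‖y - x t‖ ^ 2 ≤ F (t - 1) y :=
    fun t h1 h2 => ftrl_strong_min (hFstrong (t - 1) (by omega)) (hmem t h1 h2)
      (fun y hy => (hx t h1 h2).2 y hy)
  -- Part (i)
  have part1 : ∀ t, 1 ≤ t → t ≤ T → ‖x (t + 1) - x t‖ ≤ η * Lg / α := by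
    intro t ht1 htT
    obtain ⟨k, rfl⟩ : ∃ k, t = k + 1 := ⟨t - 1, by omega⟩
    set d : ℝ := ‖x (k + 2) - x (k + 1)‖ with hd
    have h1 := hquad (k + 1) (by omega) (by omega) (x (k + 2)) (hmem (k + 2) (by omega) (by omega))
    have h2 := hquad (k + 2) (by omega) (by omega) (x (k + 1)) (hmem (k + 1) (by omega) (by omega))
    simp only [Nat.add_sub_cancel, show k + 2 - 1 = k + 1 from rfl] at h1 h2
    have hsplit : ∀ y, F (k + 1) y = F k y + g (k + 1) y := by
      intro y
      simp only [hF]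
      rw [Finset.sum_Icc_succ_top (by omega)]
      ring
    rw [hsplit (x (k + 2)), hsplit (x (k + 1))] at h2
    have hrev : ‖x (k + 1) - x (k + 2)‖ = d := norm_sub_rev _ _
    rw [hrev] at h2
    -- adding h1 and h2 : (α/η) * d^2 ≤ g (k+1) (x (k+1)) - g (k+1) (x (k+2))
    have hlipk := hlip (k + 1) (by omega) htT (x (k + 1)) (hmem (k + 1) (by omega) (by omega))
      (x (k + 2)) (hmem (k + 2) (by omega) (by omega))
    have habs : g (k + 1) (x (k + 1)) - g (k + 1) (x (k + 2)) ≤ Lg * d := by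
      calc g (k + 1) (x (k + 1)) - g (k + 1) (x (k + 2))
          ≤ |g (k + 1) (x (k + 1)) - g (k + 1) (x (k + 2))| := le_abs_self _
        _ ≤ Lg * ‖x (k + 1) - x (k + 2)‖ := hlipk
        _ = Lg * d := by rw [hrev]
    have hmain : α / η * d ^ 2 ≤ Lg * d := by
      have := h1; have := h2
      nlinarith [h1, h2, habs]
    rcases eq_or_lt_of_le (norm_nonneg (x (k + 2) - x (k + 1))) with h0 | h0
    · rw [hd, ← h0]; positivity
    · rw [← hd] at h0
      have hkey : α / η * d ≤ Lg := by
        have : (α / η * d) * d ≤ Lg * d := by nlinarith [hmain]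
        exact le_of_mul_le_mul_right this h0
      rw [le_div_iff₀ hα]
      have h5 := mul_le_mul_of_nonneg_left hkey hη.le
      have h6 : η * (α / η * d) = d * α := by field_simp
      linarith
  refine ⟨part1, ?_⟩
  -- Be-the-leader lemma
  have BTL : ∀ n, n ≤ T → ∀ y ∈ X,
      R (x 1) / η + ∑ t ∈ Finset.Icc 1 n, g t (x (t + 1))
        ≤ R y / η + ∑ t ∈ Finset.Icc 1 n, g t y := by
    intro n
    induction n with
    | zero =>
      intro _ y hy
      have h := (hx 1 le_rfl (by omega)).2 y hy
      simpa using h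
    | succ k ih =>
      intro hk y hy
      have hxk2 := hx (k + 2) (by omega) (by omega)
      have ihh := ih (by omega) (x (k + 2)) hxk2.1
      have hminy := hxk2.2 y hy
      simp only [show k + 2 - 1 = k + 1 from rfl] at hminy
      rw [Finset.sum_Icc_succ_top (by omega), Finset.sum_Icc_succ_top (by omega)] at hminy
      rw [Finset.sum_Icc_succ_top (by omega), Finset.sum_Icc_succ_top (by omega)]
      have : k + 1 + 1 = k + 2 := rfl
      rw [this]
      linarith
  intro y hy
  have hBTL := BTL T le_rfl y hy
  have hstep : ∀ t ∈ Finset.Icc 1 T, g t (x t) - g t (x (t + 1)) ≤ η * Lg ^ 2 / α := by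
    intro t ht
    rw [Finset.mem_Icc] at ht
    have hb := part1 t ht.1 ht.2
    calc g t (x t) - g t (x (t + 1))
        ≤ |g t (x t) - g t (x (t + 1))| := le_abs_self _
      _ ≤ Lg * ‖x t - x (t + 1)‖ := hlip t ht.1 ht.2 (x t) (hmem t ht.1 (by omega))
          (x (t + 1)) (hmem (t + 1) (by omega) (by omega))
      _ = Lg * ‖x (t + 1) - x t‖ := by rw [norm_sub_rev]
      _ ≤ Lg * (η * Lg / α) := mul_le_mul_of_nonneg_left hb hLg
      _ = η * Lg ^ 2 / α := by ring
  have hsum : ∑ t ∈ Finset.Icc 1 T, (g t (x t) - g t (x (t + 1))) ≤ T * (η * Lg ^ 2 / α) := by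
    calc ∑ t ∈ Finset.Icc 1 T, (g t (x t) - g t (x (t + 1)))
        ≤ ∑ t ∈ Finset.Icc 1 T, (η * Lg ^ 2 / α) := Finset.sum_le_sum hstep
      _ = T * (η * Lg ^ 2 / α) := by
          rw [Finset.sum_const, Nat.card_Icc]
          simp [nsmul_eq_mul]
  have hDbound : R y - R (x 1) ≤ D := le_trans (le_abs_self _) (hD y hy (x 1) (hmem 1 le_rfl (by omega)))
  have hdiv : (R y - R (x 1)) / η ≤ D / η := by gcongr
  have hsplit2 : ∑ t ∈ Finset.Icc 1 T, g t (x t)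
      = ∑ t ∈ Finset.Icc 1 T, (g t (x t) - g t (x (t + 1)))
        + ∑ t ∈ Finset.Icc 1 T, g t (x (t + 1)) := by
    rw [← Finset.sum_add_distrib]
    congr 1; funext t; ring
  have hfinal : (R y - R (x 1)) / η = R y / η - R (x 1) / η := by ring
  calc (∑ t ∈ Finset.Icc 1 T, g t (x t)) - ∑ t ∈ Finset.Icc 1 T, g t y
      ≤ T * (η * Lg ^ 2 / α) + (R y / η - R (x 1) / η) := by
        rw [hsplit2]; linarith [hBTL, hsum]
    _ ≤ D / η + η * T * Lg ^ 2 / α := by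
        rw [← hfinal]
        have : (T : ℝ) * (η * Lg ^ 2 / α) = η * T * Lg ^ 2 / α := by ring
        linarith [hdiv, this.le, this.ge]
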